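/- Let τ, p, M, K, β > 0 with M > K. Then log₂(1 + (τ·p²·(M−K)·β²)/((τ·p·β + 1)·S + τ·p·β + 1)) ≥ log₂(1 + τ·p²·(M−K)·β²) − log₂(1 + τ·p·β) − log₂(1 + K/τ) for any real S with 0 ≤ S ≤ K/τ. -/
import Mathlib


theorem stmt_16 (τ p M K β S : ℝ) (hτ : 0 < τ) (hp : 0 < p) (hM : 0 < M) (hK : 0 < K)
    (hβ : 0 < β) (hMK : K < M) (hS0 : 0 ≤ S) (hS : S ≤ K / τ) :
    Real.logb 2 (1 + (τ * p ^ 2 * (M - K) * β ^ 2) / ((τ * p * β + 1) * S + τ * p * β + 1))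
      ≥ Real.logb 2 (1 + τ * p ^ 2 * (M - K) * β ^ 2)
          - Real.logb 2 (1 + τ * p * β) - Real.logb 2 (1 + K / τ) := by
  set A := τ * p ^ 2 * (M - K) * β ^ 2 with hA
  have hA0 : 0 < A := by
    have : 0 < M - K := by linarith
    positivity
  have hpb : 0 < τ * p * β := by positivity
  have hc : (1:ℝ) ≤ τ * p * β + 1 := by linarith
  have hc0 : (0:ℝ) < τ * p * β + 1 := by linarith
  have hKτ : 0 < K / τ := by positivity
  have hE : (1:ℝ) ≤ 1 + K / τ := by linarith
  have hE0 : (0:ℝ) < 1 + K / τ := by linarith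
  have hD : (τ * p * β + 1) * S + τ * p * β + 1 = (τ * p * β + 1) * (S + 1) := by ring
  have hD0 : (0:ℝ) < (τ * p * β + 1) * (S + 1) := by positivity
  have hDle : (τ * p * β + 1) * (S + 1) ≤ (τ * p * β + 1) * (1 + K / τ) := by
    apply mul_le_mul_of_nonneg_left (by linarith) (le_of_lt hc0)
  have hD1 : (1:ℝ) ≤ (τ * p * β + 1) * (S + 1) := by nlinarith
  have key : (1 + A) / ((τ * p * β + 1) * (1 + K / τ)) ≤ 1 + A / ((τ * p * β + 1) * (S + 1)) := by
    rw [div_le_iff₀ (by positivity)]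
    have h1 : A / ((τ * p * β + 1) * (S + 1)) * ((τ * p * β + 1) * (1 + K / τ))
        = A * (((τ * p * β + 1) * (1 + K / τ)) / ((τ * p * β + 1) * (S + 1))) := by ring
    have h2 : (1:ℝ) ≤ ((τ * p * β + 1) * (1 + K / τ)) / ((τ * p * β + 1) * (S + 1)) := by
      rw [le_div_iff₀ hD0]; linarith
    nlinarith [mul_le_mul_of_nonneg_left h2 (le_of_lt hA0)]
  have hrw : Real.logb 2 (1 + A) - Real.logb 2 (1 + τ * p * β) - Real.logb 2 (1 + K / τ)
      = Real.logb 2 ((1 + A) / ((τ * p * β + 1) * (1 + K / τ))) := by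
    rw [Real.logb_div (by positivity) (by positivity), Real.logb_mul (by positivity) (by positivity), add_comm (1:ℝ) (τ * p * β)]
    ring
  rw [ge_iff_le, hD, hrw]
  exact Real.logb_le_logb_of_le one_lt_two (by positivity) key
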